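/- (Hersh's lemma, totally upwind case) Let a_{-r}, …, a_0 be complex numbers with a_{-r} ≠ 0, and let γ(θ) = Σ_{k=-r}^{0} a_k e^{ikθ} with symbol curve Γ = γ([0,2π]). If z belongs to the unbounded connected component of ℂ \ Γ, then every root κ of the characteristic equation z κ^r = Σ_{k=-r}^{0} a_k κ^{r+k} satisfies |κ| < 1. -/

import Mathlib

open Complex Finset

lemma hersh_sum_reindex (r : ℕ) (g : ℤ → ℂ) :
    ∑ k ∈ Finset.Icc (-(r:ℤ)) 0, g k = ∑ j ∈ Finset.range (r+1), g (-(j:ℤ)) := by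
  have h : Finset.Icc (-(r:ℤ)) 0 =
      (Finset.range (r+1)).map ⟨(fun j => -(j:ℤ) : ℕ → ℤ), fun x y h => by exact_mod_cast neg_inj.mp h⟩ := by
    ext k
    simp only [Finset.mem_Icc, Finset.mem_map, Finset.mem_range, Function.Embedding.coeFn_mk]
    constructor
    · rintro ⟨h1, h2⟩
      exact ⟨(-k).toNat, by omega, by change -(((-k).toNat : ℕ) : ℤ) = k; omega⟩
    · rintro ⟨j, hj, rfl⟩; change -(r:ℤ) ≤ -(j:ℤ) ∧ -(j:ℤ) ≤ 0; omega
  rw [h, Finset.sum_map]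
  rfl

/-- Hersh's lemma (totally upwind case): if `z` lies in the unbounded connected component
of the complement of the symbol curve `Γ`, then every root `κ` of the characteristic
equation `z κ^r = Σ_{k=-r}^{0} a_k κ^{r+k}` satisfies `|κ| < 1`. -/
theorem hersh_lemma (r : ℕ) (hr : 1 ≤ r) (a : ℤ → ℂ) (ha : a (-(r:ℤ)) ≠ 0)
    (Γ : Set ℂ)
    (hΓ : Γ = (fun θ : ℝ => ∑ k ∈ Finset.Icc (-(r:ℤ)) 0,
      a k * Complex.exp (Complex.I * k * θ)) '' Set.Icc 0 (2 * Real.pi))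
    (z : ℂ) (hz : z ∈ Γᶜ)
    (hunbdd : ¬ Bornology.IsBounded (connectedComponentIn Γᶜ z))
    (κ : ℂ)
    (hκ : z * κ ^ r = ∑ k ∈ Finset.Icc (-(r:ℤ)) 0, a k * κ ^ ((r : ℤ) + k).toNat) :
    ‖κ‖ < 1 := by
  classical
  set P : Polynomial ℂ := ∑ j ∈ Finset.range (r+1), Polynomial.C (a (-(j:ℤ))) * Polynomial.X ^ j
    with hPdef
  set f : ℂ → ℂ := fun w => P.eval w with hfdef
  have hf_eval : ∀ w : ℂ, f w = ∑ j ∈ Finset.range (r+1), a (-(j:ℤ)) * w ^ j := by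
    intro w
    simp [hfdef, hPdef, Polynomial.eval_finset_sum]
  have hPcoeff : P.coeff r = a (-(r:ℤ)) := by
    simp only [hPdef, Polynomial.finset_sum_coeff, Polynomial.coeff_C_mul,
      Polynomial.coeff_X_pow]
    rw [Finset.sum_eq_single r]
    · simp
    · intro b _ hb; simp [Ne.symm hb]
    · intro h; exact absurd (Finset.self_mem_range_succ r) h
  -- every unit-modulus w gives f w ∈ Γ
  have hΓmem : ∀ w : ℂ, ‖w‖ = 1 → f w ∈ Γ := by
    intro w hw
    have harg := Complex.norm_mul_exp_arg_mul_I w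
    rw [hw] at harg
    simp only [ofReal_one, one_mul] at harg
    have hargmem := Complex.arg_mem_Ioc w
    have hpi := Real.pi_pos
    obtain ⟨θ, hθmem, hθeq⟩ : ∃ θ ∈ Set.Icc (0:ℝ) (2*Real.pi),
        w = Complex.exp (-(Complex.I * θ)) := by
      by_cases h : Complex.arg w ≤ 0
      · refine ⟨-Complex.arg w, ⟨by linarith, by linarith [hargmem.1]⟩, ?_⟩
        rw [eq_comm, show -(Complex.I * ((-Complex.arg w : ℝ) : ℂ))
            = (Complex.arg w : ℂ) * Complex.I by push_cast; ring, harg]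
      · refine ⟨2*Real.pi - Complex.arg w, ⟨by linarith [hargmem.2], by linarith⟩, ?_⟩
        rw [eq_comm, show -(Complex.I * ((2*Real.pi - Complex.arg w : ℝ) : ℂ))
            = (Complex.arg w : ℂ) * Complex.I - 2*Real.pi*Complex.I by push_cast; ring,
          Complex.exp_sub, Complex.exp_two_pi_mul_I, div_one, harg]
    rw [hΓ]
    refine ⟨θ, hθmem, ?_⟩
    simp only []
    rw [hersh_sum_reindex r, hf_eval, hθeq]
    refine Finset.sum_congr rfl fun j _ => ?_
    congr 1
    rw [← Complex.exp_nat_mul]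
    congr 1
    push_cast
    ring
  -- analytic and nonconstant
  have hana : AnalyticOnNhd ℂ f Set.univ := by
    have := AnalyticOnNhd.eval_polynomial (𝕜 := ℂ) P
    simpa [hfdef] using this
  have hcont : Continuous f := by
    rw [hfdef]; exact P.continuous_aeval
  have hopen : ∀ s ⊆ (Set.univ : Set ℂ), IsOpen s → IsOpen (f '' s) := by
    rcases AnalyticOnNhd.is_constant_or_isOpen hana isPreconnected_univ with ⟨w0, hw0⟩ | h
    · exfalso
      have hroot : {x : ℂ | (P - Polynomial.C w0).IsRoot x} = Set.univ := by
        ext t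
        simp only [Set.mem_setOf_eq, Polynomial.IsRoot, Polynomial.eval_sub,
          Polynomial.eval_C, sub_eq_zero, Set.mem_univ, iff_true]
        exact hw0 t (Set.mem_univ t)
      have hP0 : P - Polynomial.C w0 = 0 :=
        Polynomial.eq_zero_of_infinite_isRoot _ (by rw [hroot]; exact Set.infinite_univ)
      have : (P - Polynomial.C w0).coeff r = a (-(r:ℤ)) := by
        rw [Polynomial.coeff_sub, hPcoeff, Polynomial.coeff_C,
          if_neg (by omega : ¬ r = 0), sub_zero]
      rw [hP0] at this
      simp at this
      exact ha this.symm
    · exact h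
  have hUopen : IsOpen (f '' Metric.ball 0 1) :=
    hopen _ (Set.subset_univ _) Metric.isOpen_ball
  -- the complement of the image of the closed ball
  have hKcompact : IsCompact (f '' Metric.closedBall 0 1) :=
    (isCompact_closedBall 0 1).image hcont
  have hVopen : IsOpen ((f '' Metric.closedBall 0 1)ᶜ) := hKcompact.isClosed.isOpen_compl
  set C := connectedComponentIn Γᶜ z with hC
  have hCsub : C ⊆ Γᶜ := connectedComponentIn_subset _ _
  have hCpre : IsPreconnected C := isPreconnected_connectedComponentIn
  have hzC : z ∈ C := mem_connectedComponentIn hz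
  -- cover
  have hcover : C ⊆ f '' Metric.ball 0 1 ∪ (f '' Metric.closedBall 0 1)ᶜ := by
    intro z' hz'
    by_cases hK : z' ∈ f '' Metric.closedBall 0 1
    · obtain ⟨w, hw, rfl⟩ := hK
      left
      rcases lt_or_eq_of_le (Metric.mem_closedBall.mp hw) with h1 | h1
      · exact ⟨w, by simpa [Metric.mem_ball] using h1, rfl⟩
      · exfalso
        have : f w ∈ Γ := hΓmem w (by simpa [Complex.dist_eq] using h1)
        exact hCsub hz' this
    · right; exact hK
  -- V ∩ C nonempty via unboundedness
  obtain ⟨R, hR⟩ := hKcompact.isBounded.subset_closedBall (0:ℂ)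
  have hVC : (C ∩ (f '' Metric.closedBall 0 1)ᶜ).Nonempty := by
    rw [Metric.isBounded_iff_subset_closedBall (0:ℂ)] at hunbdd
    push_neg at hunbdd
    obtain ⟨z', hz'C, hz'R⟩ := (Set.not_subset).mp (hunbdd R)
    exact ⟨z', hz'C, fun hmem => hz'R (hR hmem)⟩
  -- now suppose |κ| ≥ 1
  by_contra hcon
  push_neg at hcon
  have hκ0 : κ ≠ 0 := by
    intro h; rw [h] at hcon; simp at hcon; linarith
  have hκr : (κ : ℂ) ^ r ≠ 0 := pow_ne_zero _ hκ0
  have hfz : f κ⁻¹ = z := by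
    have hsum : ∑ k ∈ Finset.Icc (-(r:ℤ)) 0, a k * κ ^ ((r : ℤ) + k).toNat
        = ∑ j ∈ Finset.range (r+1), a (-(j:ℤ)) * κ ^ (r - j) := by
      rw [hersh_sum_reindex r (fun k => a k * κ ^ ((r : ℤ) + k).toNat)]
      refine Finset.sum_congr rfl fun j hj => ?_
      have hjr : j ≤ r := by simpa [Nat.lt_succ_iff] using hj
      congr 2
      omega
    have : f κ⁻¹ * κ ^ r = z * κ ^ r := by
      rw [hf_eval, Finset.sum_mul, hκ, hsum]
      refine Finset.sum_congr rfl fun j hj => ?_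
      have hjr : j ≤ r := by simpa [Nat.lt_succ_iff] using hj
      rw [mul_assoc]
      congr 1
      rw [inv_pow]
      field_simp
      rw [← pow_add]
      congr 1
      omega
    exact mul_right_cancel₀ hκr this
  have habsinv : ‖κ⁻¹‖ ≤ 1 := by
    rw [norm_inv]
    exact inv_le_one_of_one_le₀ hcon
  have hlt : ‖κ⁻¹‖ < 1 := by
    rcases lt_or_eq_of_le habsinv with h | h
    · exact h
    · exact absurd (hfz ▸ hΓmem κ⁻¹ h) hz
  have hzU : z ∈ f '' Metric.ball 0 1 :=
    ⟨κ⁻¹, by simpa [Metric.mem_ball, Complex.dist_eq] using hlt, hfz⟩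
  -- preconnectedness contradiction
  have hdisj : C ∩ (f '' Metric.ball 0 1 ∩ (f '' Metric.closedBall 0 1)ᶜ) = ∅ := by
    ext x
    simp only [Set.mem_inter_iff, Set.mem_compl_iff, Set.mem_empty_iff_false, iff_false]
    rintro ⟨_, ⟨w, hw, rfl⟩, hK⟩
    exact hK ⟨w, Metric.ball_subset_closedBall hw, rfl⟩
  have := hCpre _ _ hUopen hVopen hcover ⟨z, hzC, hzU⟩ hVC
  rw [hdisj] at this
  exact Set.not_nonempty_empty this
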